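/- Let Ω_n(m) denote the number of sequences (a_1,…,a_n) ∈ {1,…,m}^n with a_1 ≤ a_2 ≥ a_3 ≤ a_4 ≥ ⋯, with Ω_0(m) = 1. Then for all n ≥ 2 and m ≥ 1: Ω_n(m) = Ω_n(m−1) + Σ_{0 ≤ j ≤ (n−1)/2} Ω_{2j}(m−1)·Ω_{n−1−2j}(m). -/

import Mathlib

/-- `f : [n] → {1,…,m}` is a zig-zag sequence: `f(1) ≤ f(2) ≥ f(3) ≤ f(4) ≥ ⋯`. -/
def IsZigZagSeq {n m : ℕ} (f : Fin n → Fin m) : Prop :=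
  ∀ (i : ℕ) (h : i + 1 < n),
    (i % 2 = 0 → f ⟨i, Nat.lt_of_succ_lt h⟩ ≤ f ⟨i + 1, h⟩) ∧
    (i % 2 = 1 → f ⟨i + 1, h⟩ ≤ f ⟨i, Nat.lt_of_succ_lt h⟩)

/-- The zig-zag order polynomial `Ω_n(m)`: the number of zig-zag sequences of length `n`
with entries in `{1,…,m}`. In particular `Ω_0(m) = 1` and `Ω_n(0) = 0` for `n ≥ 1`. -/
noncomputable def zzOmega (n m : ℕ) : ℕ :=
  Set.ncard {f : Fin n → Fin m | IsZigZagSeq f}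

attribute [local instance] Classical.propDecidable

/-- Descent-first zig-zag sequences: `f(1) ≥ f(2) ≤ f(3) ≥ ⋯`. -/
def IsZagSeq {n m : ℕ} (f : Fin n → Fin m) : Prop :=
  ∀ (i : ℕ) (h : i + 1 < n),
    (i % 2 = 0 → f ⟨i + 1, h⟩ ≤ f ⟨i, Nat.lt_of_succ_lt h⟩) ∧
    (i % 2 = 1 → f ⟨i, Nat.lt_of_succ_lt h⟩ ≤ f ⟨i + 1, h⟩)

noncomputable def zzF (n m : ℕ) : Finset (Fin n → Fin m) :=
  Finset.univ.filter (fun f => IsZigZagSeq f)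
noncomputable def zgF (n m : ℕ) : Finset (Fin n → Fin m) :=
  Finset.univ.filter (fun f => IsZagSeq f)

lemma zzOmega_eq_card (n m : ℕ) : zzOmega n m = (zzF n m).card := by
  rw [zzOmega, Set.ncard_eq_toFinset_card', zzF]
  congr 1
  ext f
  simp [Set.mem_toFinset]

lemma zg_card_eq (n m : ℕ) : (zgF n m).card = zzOmega n m := by
  rw [zzOmega_eq_card]
  apply Finset.card_nbij' (i := fun f => fun x => (f x).rev) (j := fun f => fun x => (f x).rev)
  · intro f hf
    simp only [zgF, zzF, Finset.mem_coe, Finset.mem_filter, Finset.mem_univ, true_and] at hf ⊢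
    intro i h
    exact ⟨fun hp => Fin.rev_le_rev.mpr ((hf i h).1 hp),
      fun hp => Fin.rev_le_rev.mpr ((hf i h).2 hp)⟩
  · intro f hf
    simp only [zgF, zzF, Finset.mem_coe, Finset.mem_filter, Finset.mem_univ, true_and] at hf ⊢
    intro i h
    exact ⟨fun hp => Fin.rev_le_rev.mpr ((hf i h).1 hp),
      fun hp => Fin.rev_le_rev.mpr ((hf i h).2 hp)⟩
  · intro f _; funext x; simp
  · intro f _; funext x; simp

/-- The index of the first occurrence of the top value `m'` in `f`. -/
noncomputable def zzK {n m' : ℕ} (f : Fin n → Fin (m' + 1)) : ℕ :=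
  sInf {i | ∃ h : i < n, f ⟨i, h⟩ = Fin.last m'}

lemma zzK_mem {n m' : ℕ} {f : Fin n → Fin (m' + 1)} (hf : ∃ i, f i = Fin.last m') :
    ∃ h : zzK f < n, f ⟨zzK f, h⟩ = Fin.last m' := by
  obtain ⟨i, hi⟩ := hf
  have : (i : ℕ) ∈ {i | ∃ h : i < n, f ⟨i, h⟩ = Fin.last m'} := ⟨i.isLt, by simpa using hi⟩
  exact Nat.sInf_mem ⟨_, this⟩

lemma zzK_not {n m' : ℕ} {f : Fin n → Fin (m' + 1)} {i : ℕ} (hi : i < zzK f) (h : i < n) :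
    f ⟨i, h⟩ ≠ Fin.last m' := fun he => Nat.notMem_of_lt_sInf hi ⟨h, he⟩

lemma zzK_even {n m' : ℕ} {f : Fin n → Fin (m' + 1)} (hzag : IsZagSeq f)
    (hf : ∃ i, f i = Fin.last m') : zzK f % 2 = 0 := by
  by_contra hodd
  have hodd : zzK f % 2 = 1 := by omega
  obtain ⟨hlt, htop⟩ := zzK_mem hf
  have h1 : 1 ≤ zzK f := by omega
  have hc := (hzag (zzK f - 1) (by omega)).1 (by omega)
  have hidx : (⟨zzK f - 1 + 1, by omega⟩ : Fin n) = ⟨zzK f, hlt⟩ := by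
    apply Fin.ext; simp; omega
  rw [hidx, htop] at hc
  exact zzK_not (i := zzK f - 1) (by omega) (by omega) (le_antisymm (Fin.le_last _) hc)

/-- Glue a descent-first prefix (with values `< m'`), a top value, and an ascent-first suffix. -/
def glue {n m' : ℕ} (j : ℕ) (g : Fin (2 * j) → Fin m') (h : Fin (n - 1 - 2 * j) → Fin (m' + 1))
    (x : Fin n) : Fin (m' + 1) :=
  if hlt : x.val < 2 * j then (g ⟨x.val, hlt⟩).castSucc
  else if heq : x.val = 2 * j then Fin.last m'
  else h ⟨x.val - (2 * j + 1), by have := x.isLt; omega⟩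

lemma glue_lt {n m' : ℕ} {j : ℕ} {g : Fin (2 * j) → Fin m'}
    {h : Fin (n - 1 - 2 * j) → Fin (m' + 1)} {x : Fin n} (hx : x.val < 2 * j) :
    glue j g h x = (g ⟨x.val, hx⟩).castSucc := dif_pos hx

lemma glue_top {n m' : ℕ} {j : ℕ} {g : Fin (2 * j) → Fin m'}
    {h : Fin (n - 1 - 2 * j) → Fin (m' + 1)} {x : Fin n} (hx : x.val = 2 * j) :
    glue j g h x = Fin.last m' := by
  rw [glue, dif_neg (by omega), dif_pos hx]

lemma glue_gt {n m' : ℕ} {j : ℕ} {g : Fin (2 * j) → Fin m'}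
    {h : Fin (n - 1 - 2 * j) → Fin (m' + 1)} {x : Fin n} (hx : 2 * j < x.val) :
    glue j g h x = h ⟨x.val - (2 * j + 1), by have := x.isLt; omega⟩ := by
  rw [glue, dif_neg (by omega), dif_neg (by omega)]

lemma val_lt_of_ne_last {m' : ℕ} {v : Fin (m' + 1)} (hv : v ≠ Fin.last m') : v.val < m' := by
  have h1 := v.isLt
  have h2 : v.val ≠ m' := fun h => hv (Fin.ext h)
  omega

lemma glue_zag {n m' j : ℕ} {g : Fin (2 * j) → Fin m'} {h : Fin (n - 1 - 2 * j) → Fin (m' + 1)}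
    (hg : IsZagSeq g) (hh : IsZigZagSeq h) : IsZagSeq (glue j g h) := by
  intro i hi1
  rcases Nat.lt_trichotomy (i + 1) (2 * j) with hc | hc | hc
  · have e1 := glue_lt (g := g) (h := h) (x := (⟨i, Nat.lt_of_succ_lt hi1⟩ : Fin n))
      (show i < 2 * j by omega)
    have e2 := glue_lt (g := g) (h := h) (x := (⟨i + 1, hi1⟩ : Fin n)) hc
    have hgi := hg i (by omega)
    constructor
    · intro hp
      rw [e1, e2]
      exact Fin.castSucc_le_castSucc_iff.mpr (hgi.1 hp)
    · intro hp
      rw [e1, e2]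
      exact Fin.castSucc_le_castSucc_iff.mpr (hgi.2 hp)
  · constructor
    · intro hp; omega
    · intro hp
      rw [glue_top (x := (⟨i + 1, hi1⟩ : Fin n)) hc]
      exact Fin.le_last _
  · rcases Nat.lt_trichotomy i (2 * j) with hc2 | hc2 | hc2
    · omega
    · constructor
      · intro hp
        rw [glue_top (x := (⟨i, Nat.lt_of_succ_lt hi1⟩ : Fin n)) hc2]
        exact Fin.le_last _
      · intro hp; omega
    · have e1 := glue_gt (g := g) (h := h) (x := (⟨i, Nat.lt_of_succ_lt hi1⟩ : Fin n)) hc2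
      have e2 := glue_gt (g := g) (h := h) (x := (⟨i + 1, hi1⟩ : Fin n))
        (show 2 * j < i + 1 by omega)
      have hidx : (⟨i + 1 - (2 * j + 1), by omega⟩ : Fin (n - 1 - 2 * j))
          = ⟨i - (2 * j + 1) + 1, by omega⟩ := Fin.ext (by simp; omega)
      have hhs := hh (i - (2 * j + 1)) (by omega)
      constructor
      · intro hp
        rw [e1, e2, hidx]
        exact hhs.2 (by omega)
      · intro hp
        rw [e1, e2, hidx]
        exact hhs.1 (by omega)

lemma glue_K {n m' j : ℕ} (hjn : 2 * j < n) (g : Fin (2 * j) → Fin m')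
    (h : Fin (n - 1 - 2 * j) → Fin (m' + 1)) : zzK (glue j g h) = 2 * j := by
  have hmem : (2 * j) ∈ {i | ∃ hh : i < n, glue j g h ⟨i, hh⟩ = Fin.last m'} :=
    ⟨hjn, glue_top rfl⟩
  have hle : zzK (glue j g h) ≤ 2 * j := Nat.sInf_le hmem
  rcases lt_or_eq_of_le hle with hlt | he
  · exfalso
    obtain ⟨hk, htop⟩ := zzK_mem (f := glue j g h) ⟨⟨2 * j, hjn⟩, glue_top rfl⟩
    rw [glue_lt hlt] at htop
    exact absurd htop (Fin.castSucc_lt_last _).ne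
  · exact he

lemma L1 (n m' : ℕ) :
    ((zgF n (m' + 1)).filter (fun f => ¬ ∃ i, f i = Fin.last m')).card
      = (zgF n m').card := by
  apply Finset.card_bij' (i := fun f hf => fun x : Fin n =>
      (⟨(f x).val, by
        have hne : f x ≠ Fin.last m' := by
          simp only [Finset.mem_filter] at hf
          exact fun he => hf.2 ⟨x, he⟩
        exact val_lt_of_ne_last hne⟩ : Fin m'))
    (j := fun g hg => fun x : Fin n => (g x).castSucc)
  case hi =>
    intro f hf
    simp only [zgF, Finset.mem_filter, Finset.mem_univ, true_and] at hf ⊢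
    intro i h
    have := hf.1 i h
    exact ⟨fun hp => this.1 hp, fun hp => this.2 hp⟩
  case hj =>
    intro g hg
    simp only [zgF, Finset.mem_filter, Finset.mem_univ, true_and] at hg ⊢
    constructor
    · intro i h
      have := hg i h
      constructor
      · intro hp; exact Fin.castSucc_le_castSucc_iff.mpr (this.1 hp)
      · intro hp; exact Fin.castSucc_le_castSucc_iff.mpr (this.2 hp)
    · rintro ⟨i, hi⟩
      have h1 := (g i).isLt
      have h2 := congrArg Fin.val hi
      simp at h2
      omega
  case left_inv => intro f hf; funext x; apply Fin.ext; simp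
  case right_inv => intro g hg; funext x; apply Fin.ext; simp

lemma L2 (n m' j : ℕ) (hn : 2 ≤ n) (hj : 2 * j ≤ n - 1) :
    ((zgF n (m' + 1)).filter
        (fun f => (∃ i, f i = Fin.last m') ∧ zzK f / 2 = j)).card
      = ((zgF (2 * j) m') ×ˢ (zzF (n - 1 - 2 * j) (m' + 1))).card := by
  apply Finset.card_bij'
    (i := fun f hf =>
      (fun a : Fin (2 * j) =>
        (⟨(f ⟨a.val, by have := a.isLt; omega⟩).val, by
          rw [Finset.mem_filter] at hf
          have hzag : IsZagSeq f := by simpa [zgF] using hf.1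
          have htop := hf.2.1
          have hdiv := hf.2.2
          have heven := zzK_even hzag htop
          have hK : zzK f = 2 * j := by omega
          exact val_lt_of_ne_last
            (zzK_not (show a.val < zzK f by have := a.isLt; omega)
              (by have := a.isLt; omega))⟩ : Fin m'),
       fun b : Fin (n - 1 - 2 * j) => f ⟨2 * j + 1 + b.val, by have := b.isLt; omega⟩))
    (j := fun p hp => glue j p.1 p.2)
  case hi =>
    intro f hf
    rw [Finset.mem_filter] at hf
    have hzag : IsZagSeq f := by simpa [zgF] using hf.1
    rw [Finset.mem_product]
    constructor
    · simp only [zgF, Finset.mem_filter, Finset.mem_univ, true_and]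
      intro i hi1
      have hgi := hzag i (by omega)
      constructor
      · intro hp
        exact Fin.mk_le_mk.mpr (hgi.1 hp)
      · intro hp
        exact Fin.mk_le_mk.mpr (hgi.2 hp)
    · simp only [zzF, Finset.mem_filter, Finset.mem_univ, true_and]
      intro i hi1
      constructor
      · intro hp
        exact (hzag (2 * j + 1 + i) (by omega)).2 (by omega)
      · intro hp
        exact (hzag (2 * j + 1 + i) (by omega)).1 (by omega)
  case hj =>
    rintro ⟨g, h⟩ hp
    rw [Finset.mem_product] at hp
    have hg : IsZagSeq g := by simpa [zgF] using hp.1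
    have hh : IsZigZagSeq h := by simpa [zzF] using hp.2
    have hK := glue_K (show 2 * j < n by omega) g h
    rw [Finset.mem_filter]
    refine ⟨by simpa [zgF] using glue_zag hg hh,
      ⟨⟨2 * j, by omega⟩, glue_top rfl⟩, by rw [hK]; omega⟩
  case left_inv =>
    intro f hf
    rw [Finset.mem_filter] at hf
    have hzag : IsZagSeq f := by simpa [zgF] using hf.1
    have htop := hf.2.1
    have heven := zzK_even hzag htop
    have hdiv := hf.2.2
    have hK : zzK f = 2 * j := by omega
    funext x
    rcases Nat.lt_trichotomy x.val (2 * j) with hc | hc | hc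
    · rw [glue_lt hc]
      apply Fin.ext
      simp
    · rw [glue_top hc]
      obtain ⟨hkn, hktop⟩ := zzK_mem htop
      rw [← hktop]
      exact congrArg f (Fin.ext (show zzK f = x.val by omega))
    · rw [glue_gt hc]
      exact congrArg f (Fin.ext (show 2 * j + 1 + (x.val - (2 * j + 1)) = x.val by omega))
  case right_inv =>
    rintro ⟨g, h⟩ hp
    refine Prod.ext ?_ ?_
    · funext a
      apply Fin.ext
      show (glue j g h ⟨a.val, _⟩).val = (g a).val
      rw [glue_lt (x := (⟨a.val, by have := a.isLt; omega⟩ : Fin n)) a.isLt]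
      simp
    · funext b
      show glue j g h ⟨2 * j + 1 + b.val, _⟩ = h b
      rw [glue_gt (show 2 * j < 2 * j + 1 + b.val by omega)]
      exact congrArg h (Fin.ext (show 2 * j + 1 + b.val - (2 * j + 1) = b.val by omega))

/-- for `n ≥ 2` and `m ≥ 1`,
`Ω_n(m) = Ω_n(m-1) + Σ_{0 ≤ j ≤ (n-1)/2} Ω_{2j}(m-1)·Ω_{n-1-2j}(m)`. -/
theorem zzOmega_rec_two (n m : ℕ) (hn : 2 ≤ n) (hm : 1 ≤ m) :
    zzOmega n m = zzOmega n (m - 1) +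
      ∑ j ∈ Finset.range ((n - 1) / 2 + 1),
        zzOmega (2 * j) (m - 1) * zzOmega (n - 1 - 2 * j) m := by
  obtain ⟨m', rfl⟩ : ∃ m', m = m' + 1 := ⟨m - 1, by omega⟩
  simp only [Nat.add_sub_cancel]
  have h2 : ((zgF n (m' + 1)).filter (fun f => ∃ i, f i = Fin.last m')).card
      = ∑ j ∈ Finset.range ((n - 1) / 2 + 1),
          zzOmega (2 * j) m' * zzOmega (n - 1 - 2 * j) (m' + 1) := by
    have hmap : ∀ f ∈ (zgF n (m' + 1)).filter (fun f => ∃ i, f i = Fin.last m'),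
        zzK f / 2 ∈ Finset.range ((n - 1) / 2 + 1) := by
      intro f hf
      rw [Finset.mem_filter] at hf
      obtain ⟨hlt, -⟩ := zzK_mem hf.2
      simp only [Finset.mem_range]
      have : zzK f / 2 ≤ (n - 1) / 2 := Nat.div_le_div_right (by omega)
      omega
    rw [Finset.card_eq_sum_card_fiberwise hmap]
    apply Finset.sum_congr rfl
    intro j hj
    rw [Finset.mem_range] at hj
    rw [Finset.filter_filter, L2 n m' j hn (by omega), Finset.card_product,
      zg_card_eq, ← zzOmega_eq_card]
  rw [← zg_card_eq n (m' + 1),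
    ← Finset.card_filter_add_card_filter_not
      (s := zgF n (m' + 1)) (p := fun f => ∃ i, f i = Fin.last m'),
    L1, h2, zg_card_eq]
  exact Nat.add_comm _ _
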